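/- Let (t_n) be defined by t_0 = 1 and t_n = p_n - \sum_{i=0}^{n-1} \binom{n}{i}_q p_{n-i}(z_i) t_i. Then the constant coefficient satisfies t_n(0) = \sum_{k=1}^{n} (-1)^k \sum_{(b_1,...,b_k) \models n} \prod_{i=1}^{k} \binom{s_i}{b_i}_q \, p_{b_i}(z_{n - s_i}), where the inner sum ranges over compositions (b_1,...,b_k) of n with partial sums s_i = b_1 + \dots + b_i, assuming p_m(0) = 0 for all m \ge 1 and p_0 = 1. -/

import Mathlib

open Polynomial Finset

/-- The Gaussian (q-)binomial coefficient as a polynomial in `q` over `ℤ`,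
via the q-Pascal recurrence. -/
noncomputable def qBin : ℕ → ℕ → Polynomial ℤ
  | _, 0 => 1
  | 0, _ + 1 => 0
  | n + 1, k + 1 => qBin n k + Polynomial.X ^ (k + 1) * qBin n (k + 1)

/-- The Gaussian binomial evaluated at a ring element `q`. -/
noncomputable def qBinAt {R : Type*} [CommRing R] (q : R) (n k : ℕ) : R :=
  Polynomial.aeval q (qBin n k)

/-! ### Auxiliary q-factorial machinery -/

noncomputable def qNat (n : ℕ) : Polynomial ℤ := ∑ i ∈ Finset.range n, Polynomial.X ^ i

noncomputable def qFact : ℕ → Polynomial ℤ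
  | 0 => 1
  | n + 1 => qFact n * qNat (n + 1)

lemma qFact_succ (n : ℕ) : qFact (n + 1) = qFact n * qNat (n + 1) := rfl

lemma qNat_ne_zero {n : ℕ} (h : 0 < n) : qNat n ≠ 0 := by
  intro H
  have h1 : (qNat n).eval 1 = (n : ℤ) := by simp [qNat]
  rw [H] at h1
  simp at h1
  omega

lemma qFact_ne_zero (n : ℕ) : qFact n ≠ 0 := by
  induction n with
  | zero => simp [qFact]
  | succ n ih => exact mul_ne_zero ih (qNat_ne_zero n.succ_pos)

lemma qNat_add (a b : ℕ) : qNat (a + b) = qNat a + Polynomial.X ^ a * qNat b := by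
  simp only [qNat, Finset.sum_range_add, Finset.mul_sum, pow_add]

lemma qBin_zero (n : ℕ) : qBin n 0 = 1 := by cases n <;> rfl

lemma qBin_eq_zero : ∀ {n k : ℕ}, n < k → qBin n k = 0 := by
  intro n
  induction n with
  | zero => intro k hk; cases k with
    | zero => omega
    | succ k => rfl
  | succ n ih =>
    intro k hk
    cases k with
    | zero => omega
    | succ k =>
      show qBin n k + Polynomial.X ^ (k + 1) * qBin n (k + 1) = 0
      rw [ih (by omega), ih (by omega)]
      ring

lemma qBin_self : ∀ n : ℕ, qBin n n = 1 := by
  intro n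
  induction n with
  | zero => rfl
  | succ n ih =>
    show qBin n n + Polynomial.X ^ (n + 1) * qBin n (n + 1) = 1
    rw [ih, qBin_eq_zero (by omega)]
    ring

lemma qBin_mul_fact : ∀ n k : ℕ, k ≤ n → qBin n k * (qFact k * qFact (n - k)) = qFact n := by
  intro n
  induction n with
  | zero => intro k hk; interval_cases k; simp [qBin_zero, qFact]
  | succ n ih =>
    intro k hk
    cases k with
    | zero => simp [qBin_zero, qFact]
    | succ k =>
      rcases eq_or_lt_of_le hk with h | h
      · rw [h.symm] at *
        rw [qBin_self, Nat.sub_self]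
        simp [qFact]
      · have hk1 : k + 1 ≤ n := by omega
        have h1 := ih k (by omega)
        have h2 := ih (k + 1) hk1
        have hnk : n - k = (n - (k + 1)) + 1 := by omega
        have hfact : qFact (n - k) = qFact (n - (k + 1)) * qNat (n - k) := by
          rw [hnk, qFact_succ, ← hnk]
        rw [hfact] at h1
        rw [qFact_succ] at h2
        have h3 : qNat (k + 1) + Polynomial.X ^ (k + 1) * qNat (n - k) = qNat (n + 1) := by
          rw [← qNat_add]
          congr 1
          omega
        show (qBin n k + Polynomial.X ^ (k + 1) * qBin n (k + 1)) *
            (qFact (k + 1) * qFact (n + 1 - (k + 1))) = qFact (n + 1)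
        rw [qFact_succ n, qFact_succ k, show n + 1 - (k + 1) = n - k by omega, hfact]
        linear_combination qNat (k + 1) * h1 +
          (Polynomial.X ^ (k + 1) * qNat (n - k)) * h2 + qFact n * h3

lemma qBin_symm {n k : ℕ} (hk : k ≤ n) : qBin n k = qBin n (n - k) := by
  have h1 := qBin_mul_fact n k hk
  have h2 := qBin_mul_fact n (n - k) (Nat.sub_le n k)
  rw [Nat.sub_sub_self hk] at h2
  have hne : qFact k * qFact (n - k) ≠ 0 :=
    mul_ne_zero (qFact_ne_zero k) (qFact_ne_zero (n - k))
  apply mul_right_cancel₀ hne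
  rw [h1]
  linear_combination -h2

/-! ### Products over composition blocks -/

noncomputable def prodA (L : List ℕ) : Polynomial ℤ :=
  ∏ i ∈ Finset.range L.length, qBin ((L.take (i + 1)).sum) (L.getD i 0)

noncomputable def prodB : ℕ → List ℕ → Polynomial ℤ
  | _, [] => 1
  | n, b :: L => qBin n b * prodB (n - b) L

lemma prodA_concat (L : List ℕ) (b : ℕ) :
    prodA (L ++ [b]) = prodA L * qBin (L.sum + b) b := by
  unfold prodA
  rw [List.length_append, List.length_singleton, Finset.prod_range_succ]
  congr 1
  · apply Finset.prod_congr rfl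
    intro i hi
    rw [Finset.mem_range] at hi
    rw [List.take_append_of_le_length (by omega), List.getD_append _ _ _ _ (by omega)]
  · rw [List.take_of_length_le (by simp), List.getD_append_right _ _ _ _ (le_refl _),
      Nat.sub_self]
    simp

lemma prodA_fact (L : List ℕ) : prodA L * (L.map qFact).prod = qFact L.sum := by
  induction L using List.reverseRecOn with
  | nil => simp [prodA, qFact]
  | append_singleton L b ih =>
    rw [prodA_concat, List.map_append, List.prod_append, List.sum_append]
    simp only [List.map_singleton, List.prod_singleton, List.sum_singleton]
    have key := qBin_mul_fact (L.sum + b) b (by omega)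
    rw [Nat.add_sub_cancel] at key
    linear_combination (qBin (L.sum + b) b * qFact b) * ih + key

lemma prodB_fact : ∀ (L : List ℕ) (n : ℕ), L.sum = n →
    prodB n L * (L.map qFact).prod = qFact n := by
  intro L
  induction L with
  | nil => intro n h; simp at h; simp [prodB, ← h, qFact]
  | cons b L ih =>
    intro n h
    simp only [List.sum_cons] at h
    have hb : b ≤ n := by omega
    have ih' := ih (n - b) (by omega)
    have key := qBin_mul_fact n b hb
    show qBin n b * prodB (n - b) L * ((qFact b :: L.map qFact).prod) = qFact n
    rw [List.prod_cons]
    linear_combination (qBin n b * qFact b) * ih' + key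

lemma prodA_eq_prodB (L : List ℕ) (n : ℕ) (h : L.sum = n) : prodA L = prodB n L := by
  have hne : (L.map qFact).prod ≠ 0 := by
    apply List.prod_ne_zero
    intro hx
    rw [List.mem_map] at hx
    obtain ⟨a, -, ha⟩ := hx
    exact qFact_ne_zero a ha
  apply mul_right_cancel₀ hne
  rw [prodA_fact, h, prodB_fact L n h]

/-! ### The recursive weight -/

noncomputable def vW {R : Type*} [CommRing R] (q : R) (z : ℕ → R) (p : ℕ → Polynomial R) :
    ℕ → List ℕ → R
  | _, [] => 1
  | n, b :: L => -(qBinAt q n b * (p b).eval (z (n - b))) * vW q z p (n - b) L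

lemma vW_eq {R : Type*} [CommRing R] (q : R) (z : ℕ → R) (p : ℕ → Polynomial R) :
    ∀ (L : List ℕ) (n : ℕ),
    vW q z p n L = (-1 : R) ^ L.length * (Polynomial.aeval q (prodB n L) *
      ∏ i ∈ Finset.range L.length,
        (p (L.getD i 0)).eval (z (n - (L.take (i + 1)).sum))) := by
  intro L
  induction L with
  | nil => intro n; simp [vW, prodB]
  | cons b L ih =>
    intro n
    show -(qBinAt q n b * (p b).eval (z (n - b))) * vW q z p (n - b) L = _
    rw [ih (n - b)]
    simp only [List.length_cons, Finset.prod_range_succ', List.getD_cons_succ,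
      List.getD_cons_zero, List.take_succ_cons, List.sum_cons, List.take_zero, List.sum_nil,
      add_zero, ← Nat.sub_sub, Nat.sub_zero, prodB, map_mul, qBinAt]
    ring

/-! ### Compositions: cons and tail -/

def consComp {m n : ℕ} (b : ℕ) (hb : 0 < b) (h : b + m = n) (c : Composition m) :
    Composition n where
  blocks := b :: c.blocks
  blocks_pos := fun hi => by
    rcases List.mem_cons.1 hi with h' | h'
    · omega
    · exact c.blocks_pos h'
  blocks_sum := by simp [c.blocks_sum, h]

lemma consComp_blocks {m n : ℕ} (b : ℕ) (hb : 0 < b) (h : b + m = n) (c : Composition m) :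
    (consComp b hb h c).blocks = b :: c.blocks := rfl

def tailComp {n : ℕ} (c : Composition n) : Composition (n - c.blocks.headI) where
  blocks := c.blocks.tail
  blocks_pos := fun hi => c.blocks_pos (List.mem_of_mem_tail hi)
  blocks_sum := by
    have hs := c.blocks_sum
    cases hb : c.blocks with
    | nil => rw [hb] at hs; simp at hs; simp [hb, ← hs]
    | cons a L => rw [hb] at hs; simp at hs; simp [hb]; omega

lemma blocks_ne_nil {n : ℕ} (hn : 1 ≤ n) (c : Composition n) : c.blocks ≠ [] := by
  intro h
  have hs := c.blocks_sum
  rw [h] at hs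
  simp at hs
  omega

lemma headI_pos {n : ℕ} (hn : 1 ≤ n) (c : Composition n) : 0 < c.blocks.headI := by
  apply c.blocks_pos
  cases hb : c.blocks with
  | nil => exact absurd hb (blocks_ne_nil hn c)
  | cons a L => simp [hb]

lemma headI_add_tail {n : ℕ} (hn : 1 ≤ n) (c : Composition n) :
    c.blocks.headI + c.blocks.tail.sum = n := by
  have hs := c.blocks_sum
  cases hb : c.blocks with
  | nil => exact absurd hb (blocks_ne_nil hn c)
  | cons a L => rw [hb] at hs; simp at hs; simp [hb]; omega

lemma comp_heq {m m' : ℕ} (h : m = m') (c : Composition m) (c' : Composition m')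
    (hb : c.blocks = c'.blocks) : HEq c c' := by
  subst h
  exact heq_of_eq (Composition.ext hb)

lemma sum_comp_peel {R : Type*} [CommRing R] (q : R) (z : ℕ → R) (p : ℕ → Polynomial R)
    (n : ℕ) (hn : 1 ≤ n) :
    ∑ c : Composition n, vW q z p n c.blocks =
    ∑ i ∈ Finset.range n, -(qBinAt q n (n - i) * (p (n - i)).eval (z i)) *
      ∑ c : Composition i, vW q z p i c.blocks := by
  have hstep : ∑ c : Composition n, vW q z p n c.blocks
      = ∑ x ∈ (Finset.range n).sigma (fun i => (Finset.univ : Finset (Composition i))),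
          vW q z p n ((n - x.1) :: x.2.blocks) := by
    refine Finset.sum_bij'
      (fun c _ => (⟨n - c.blocks.headI, tailComp c⟩ : Σ i : ℕ, Composition i))
      (fun x hx => consComp (n - x.1)
        (by have := (Finset.mem_sigma.1 hx).1; rw [Finset.mem_range] at this; omega)
        (by have := (Finset.mem_sigma.1 hx).1; rw [Finset.mem_range] at this; omega) x.2)
      ?_ ?_ ?_ ?_ ?_
    · intro c _
      rw [Finset.mem_sigma]
      refine ⟨?_, Finset.mem_univ _⟩
      rw [Finset.mem_range]
      have h1 := headI_pos hn c
      show n - c.blocks.headI < n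
      omega
    · intro x hx
      exact Finset.mem_univ _
    · intro c _
      apply Composition.ext
      rw [consComp_blocks]
      have h1 := headI_pos hn c
      have h2 := headI_add_tail hn c
      show (n - (n - c.blocks.headI)) :: c.blocks.tail = c.blocks
      rw [show n - (n - c.blocks.headI) = c.blocks.headI by omega]
      cases hb : c.blocks with
      | nil => exact absurd hb (blocks_ne_nil hn c)
      | cons a L => simp [hb]
    · intro x hx
      have hx1 := (Finset.mem_sigma.1 hx).1
      rw [Finset.mem_range] at hx1
      refine Sigma.ext ?_ ?_
      · show n - (consComp (n - x.1) _ _ x.2).blocks.headI = x.1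
        rw [consComp_blocks]
        simp only [List.headI_cons]
        omega
      · show HEq (tailComp (consComp (n - x.1) _ _ x.2)) x.2
        apply comp_heq
        · rw [consComp_blocks]; simp only [List.headI_cons]; omega
        · rw [show (tailComp (consComp (n - x.1) _ _ x.2)).blocks
            = ((n - x.1) :: x.2.blocks).tail from rfl]
          rfl
    · intro c _
      have h1 := headI_pos hn c
      have h2 := headI_add_tail hn c
      show vW q z p n c.blocks
        = vW q z p n ((n - (n - c.blocks.headI)) :: (tailComp c).blocks)
      rw [show n - (n - c.blocks.headI) = c.blocks.headI by omega]
      congr 1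
      show c.blocks = c.blocks.headI :: c.blocks.tail
      cases hb : c.blocks with
      | nil => exact absurd hb (blocks_ne_nil hn c)
      | cons a L => simp
  rw [hstep, Finset.sum_sigma]
  apply Finset.sum_congr rfl
  intro i hi
  rw [Finset.mem_range] at hi
  rw [Finset.mul_sum]
  apply Finset.sum_congr rfl
  intro c _
  show vW q z p n ((n - i) :: c.blocks) = _
  rw [show vW q z p n ((n - i) :: c.blocks)
    = -(qBinAt q n (n - i) * (p (n - i)).eval (z (n - (n - i)))) * vW q z p (n - (n - i)) c.blocks
    from rfl]
  rw [show n - (n - i) = i by omega]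

lemma comp_zero_blocks (c : Composition 0) : c.blocks = [] := by
  cases hb : c.blocks with
  | nil => rfl
  | cons a L =>
    exfalso
    have hs := c.blocks_sum
    rw [hb] at hs
    simp at hs
    have := c.blocks_pos (hb ▸ (show a ∈ a :: L from List.mem_cons_self))
    omega

lemma sum_comp_zero {R : Type*} [CommRing R] (q : R) (z : ℕ → R) (p : ℕ → Polynomial R) :
    ∑ c : Composition 0, vW q z p 0 c.blocks = 1 := by
  have c0 : Composition 0 := ⟨[], fun hi => absurd hi (List.not_mem_nil), rfl⟩
  have huniv : (Finset.univ : Finset (Composition 0))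
      = {⟨[], fun hi => absurd hi (List.not_mem_nil), rfl⟩} := by
    apply Finset.eq_singleton_iff_unique_mem.2
    refine ⟨Finset.mem_univ _, ?_⟩
    intro c _
    exact Composition.ext (comp_zero_blocks c)
  rw [huniv, Finset.sum_singleton]
  rfl

lemma summand_eq {R : Type*} [CommRing R] (q : R) (z : ℕ → R) (p : ℕ → Polynomial R)
    (n : ℕ) (c : Composition n) :
    (-1 : R) ^ c.length * ∏ i ∈ Finset.range c.length,
      qBinAt q ((c.blocks.take (i + 1)).sum) (c.blocks.getD i 0)
        * (p (c.blocks.getD i 0)).eval (z (n - (c.blocks.take (i + 1)).sum))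
    = vW q z p n c.blocks := by
  rw [vW_eq, ← c.blocks_length, Finset.prod_mul_distrib]
  congr 2
  rw [← prodA_eq_prodB _ n c.blocks_sum, prodA, map_prod]
  rfl

/-- the constant term of the n-th generalized q-Gončarov
polynomial as a signed sum over compositions of `n`: for each composition
with blocks `b₁,…,b_k` and partial sums `sᵢ`, the product
`∏ᵢ binom(sᵢ,bᵢ)_q p_{bᵢ}(z_{n-sᵢ})` weighted by `(-1)^k`. -/
theorem goncarov_const_term_formula {R : Type*} [CommRing R] (q : R) (z : ℕ → R)
    (p t : ℕ → Polynomial R) (hp0 : p 0 = 1)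
    (hpeval : ∀ m : ℕ, 1 ≤ m → (p m).eval 0 = 0)
    (ht0 : t 0 = 1)
    (hrec : ∀ n : ℕ, 1 ≤ n → t n = p n - ∑ i ∈ Finset.range n,
      Polynomial.C (qBinAt q n i * (p (n - i)).eval (z i)) * t i) :
    ∀ n : ℕ, 1 ≤ n →
      (t n).eval 0 = ∑ c : Composition n, (-1 : R) ^ c.length *
        ∏ i ∈ Finset.range c.length,
          qBinAt q ((c.blocks.take (i + 1)).sum) (c.blocks.getD i 0)
            * (p (c.blocks.getD i 0)).eval (z (n - (c.blocks.take (i + 1)).sum)) := by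
  have key : ∀ n : ℕ, (t n).eval 0 = ∑ c : Composition n, vW q z p n c.blocks := by
    intro n
    induction n using Nat.strong_induction_on with
    | _ n ih =>
      rcases Nat.eq_zero_or_pos n with rfl | hn
      · rw [ht0, sum_comp_zero]
        simp
      · rw [hrec n hn, Polynomial.eval_sub, Polynomial.eval_finset_sum, hpeval n hn,
          sum_comp_peel q z p n hn, zero_sub, ← Finset.sum_neg_distrib]
        apply Finset.sum_congr rfl
        intro i hi
        rw [Finset.mem_range] at hi
        rw [Polynomial.eval_mul, Polynomial.eval_C, ih i hi]
        have hsym : qBinAt q n i = qBinAt q n (n - i) := by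
          unfold qBinAt
          rw [qBin_symm (le_of_lt hi)]
        rw [hsym]
        ring
  intro n _
  rw [key n]
  apply Finset.sum_congr rfl
  intro c _
  exact (summand_eq q z p n c).symm
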